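/- The edge-coloring of a tree T in which each edge e receives as its color the depth d(e) at which it is removed by the recursive balanced-edge-splitting algorithm is a conflict-free connection coloring of T. Consequently cfc(T) ≤ d(T). -/
import Mathlib


/-- `c` is a conflict-free connection coloring of `G`: every pair of distinct
vertices is joined by a path on which some color appears on exactly one edge. -/
def IsCFCColoring {V : Type*} (G : SimpleGraph V) (c : Sym2 V → ℕ) : Prop :=
  ∀ u v : V, u ≠ v → ∃ p : G.Walk u v, p.IsPath ∧
    ∃ col : ℕ, (p.edges.filter (fun e => c e = col)).length = 1

/-- The conflict-free connection number of `G`: the least `k` such that some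
coloring of the edges of `G` with colors `0, …, k-1` is a conflict-free
connection coloring. -/
noncomputable def cfcNum {V : Type*} [Fintype V] (G : SimpleGraph V) : ℕ :=
  sInf {k | ∃ c : Sym2 V → ℕ, (∀ e ∈ G.edgeSet, c e < k) ∧ IsCFCColoring G c}
/-- The graph on `V` consisting of the edges of `T` with both ends in `S`,
with the edge `{u, v}` removed. -/
def eRestrict {V : Type*} (T : SimpleGraph V) (S : Set V) (u v : V) : SimpleGraph V :=
  SimpleGraph.fromRel (fun x y => T.Adj x y ∧ x ∈ S ∧ y ∈ S ∧ s(x, y) ≠ s(u, v))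

/-- After removing the edge `{u, v}` from the component `S`, the vertex set of
the piece containing `w`. -/
def side {V : Type*} (T : SimpleGraph V) (S : Set V) (u v w : V) : Set V :=
  {x | (eRestrict T S u v).Reachable w x}

/-- The (absolute) difference of the orders of the two pieces obtained by
removing the edge `{u, v}` from the component `S`. -/
noncomputable def sideDiff {V : Type*} (T : SimpleGraph V) (S : Set V) (u v : V) : ℕ :=
  (((side T S u v u).ncard : ℤ) - ((side T S u v v).ncard : ℤ)).natAbs

/-- The edge `{u, v}` is a balanced edge of the component `S` of `T`:
it minimizes `sideDiff` among all edges of `T` inside `S`. -/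
def BalancedIn {V : Type*} (T : SimpleGraph V) (S : Set V) (u v : V) : Prop :=
  T.Adj u v ∧ u ∈ S ∧ v ∈ S ∧
    ∀ x y : V, T.Adj x y → x ∈ S → y ∈ S → sideDiff T S u v ≤ sideDiff T S x y

/-- `SplitDepth T S d` holds when the recursive balanced-edge-splitting process,
started on the component with vertex set `S`, can terminate in `d` rounds:
a singleton needs `0` rounds, and otherwise one balanced edge is removed and
the process continues in parallel on the two resulting components. -/
inductive SplitDepth {V : Type*} (T : SimpleGraph V) : Set V → ℕ → Prop
  | single (v : V) : SplitDepth T {v} 0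
  | split (S : Set V) (u v : V) (d₁ d₂ : ℕ) :
      BalancedIn T S u v →
      SplitDepth T (side T S u v u) d₁ →
      SplitDepth T (side T S u v v) d₂ →
      SplitDepth T S (1 + max d₁ d₂)

/-- `SplitColoring T c S lvl d`: a run of the recursive balanced-edge-splitting
process on the component `S`, starting at iteration number `lvl`, taking `d`
further rounds, in which every removed edge `e` gets the color `d(e)` = the
number of the iteration at which it is removed (as recorded by `c`). -/
inductive SplitColoring {V : Type*} (T : SimpleGraph V) (c : Sym2 V → ℕ) :
    Set V → ℕ → ℕ → Prop
  | single (v : V) (lvl : ℕ) : SplitColoring T c {v} lvl 0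
  | split (S : Set V) (u v : V) (lvl d₁ d₂ : ℕ) :
      BalancedIn T S u v →
      c s(u, v) = lvl →
      SplitColoring T c (side T S u v u) (lvl + 1) d₁ →
      SplitColoring T c (side T S u v v) (lvl + 1) d₂ →
      SplitColoring T c S lvl (1 + max d₁ d₂)

section Aux

open SimpleGraph Walk

variable {V : Type*} {T : SimpleGraph V} {S : Set V} {u v w x y : V}

lemma eRestrict_adj :
    (eRestrict T S u v).Adj x y ↔ T.Adj x y ∧ x ∈ S ∧ y ∈ S ∧ s(x, y) ≠ s(u, v) := by
  rw [eRestrict, SimpleGraph.fromRel_adj]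
  constructor
  · rintro ⟨hne, h | h⟩
    · exact h
    · exact ⟨h.1.symm, h.2.2.1, h.2.1, by rw [Sym2.eq_swap]; exact h.2.2.2⟩
  · intro h
    exact ⟨h.1.ne, Or.inl h⟩

lemma eRestrict_le : eRestrict T S u v ≤ T := fun _ _ h => (eRestrict_adj.mp h).1

lemma mem_side_self : w ∈ side T S u v w := SimpleGraph.Reachable.refl w

lemma side_subset (hw : w ∈ S) : side T S u v w ⊆ S := by
  intro x hx
  obtain ⟨p⟩ := hx
  induction p with
  | nil => exact hw
  | cons h p ih => exact ih (eRestrict_adj.mp h).2.2.1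

lemma reach_mem_side (hx : x ∈ side T S u v w)
    (h : (eRestrict T S u v).Reachable x y) : y ∈ side T S u v w :=
  SimpleGraph.Reachable.trans hx h

lemma not_reach (hT : T.IsTree) (huv : T.Adj u v) :
    ¬ (eRestrict T S u v).Reachable u v := by
  classical
  rintro ⟨p0⟩
  obtain ⟨p, hp⟩ := p0.toPath
  have hedges : ∀ e ∈ p.edges, e ∈ T.edgeSet := fun e he =>
    SimpleGraph.edgeSet_mono eRestrict_le (p.edges_subset_edgeSet he)
  have hq : (p.transfer T hedges).IsPath := hp.transfer _
  obtain ⟨q0, -, huni⟩ := hT.existsUnique_path u v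
  have h1 := huni _ hq
  have h2 := huni _ ((SimpleGraph.Path.singleton huv).2)
  have hmem : s(u, v) ∈ (p.transfer T hedges).edges := by
    rw [h1, ← h2]
    simp [SimpleGraph.Path.singleton]
  rw [Walk.edges_transfer] at hmem
  exact (eRestrict_adj.mp (p.edges_subset_edgeSet hmem)).2.2.2 rfl

lemma side_disjoint (hT : T.IsTree) (huv : T.Adj u v)
    (hx : x ∈ side T S u v u) (hx' : x ∈ side T S u v v) : False :=
  not_reach (S := S) hT huv (hx.trans hx'.symm)

lemma path_in_side (hx : x ∈ side T S u v w) :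
    ∃ p : T.Walk x w, p.IsPath ∧ ∀ z ∈ p.support, z ∈ side T S u v w := by
  classical
  obtain ⟨p0⟩ := hx.symm
  obtain ⟨p, hp⟩ := p0.toPath
  have hedges : ∀ e ∈ p.edges, e ∈ T.edgeSet := fun e he =>
    SimpleGraph.edgeSet_mono eRestrict_le (p.edges_subset_edgeSet he)
  refine ⟨p.transfer T hedges, hp.transfer _, ?_⟩
  intro z hz
  rw [Walk.support_transfer] at hz
  exact reach_mem_side hx (Reachable.symm ⟨p.takeUntil z hz⟩).symm

/-- Connectivity of a vertex set within `T`. -/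
def Conn {V : Type*} (T : SimpleGraph V) (S : Set V) : Prop :=
  ∀ x ∈ S, ∀ y ∈ S, ∃ p : T.Walk x y, ∀ z ∈ p.support, z ∈ S

lemma conn_side : Conn T (side T S u v w) := by
  classical
  intro x hx y hy
  obtain ⟨p0⟩ := hx.symm.trans hy
  have hedges : ∀ e ∈ p0.edges, e ∈ T.edgeSet := fun e he =>
    SimpleGraph.edgeSet_mono eRestrict_le (p0.edges_subset_edgeSet he)
  refine ⟨p0.transfer T hedges, ?_⟩
  intro z hz
  rw [Walk.support_transfer] at hz
  exact reach_mem_side hx ⟨p0.takeUntil z hz⟩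

lemma cover_aux {a : V} (p : T.Walk a x) (hsupp : ∀ z ∈ p.support, z ∈ S)
    (ha : a ∈ side T S u v u ∪ side T S u v v) :
    x ∈ side T S u v u ∪ side T S u v v := by
  induction p with
  | nil => exact ha
  | @cons a b x hab p ih =>
    have hb : b ∈ side T S u v u ∪ side T S u v v := by
      by_cases he : s(a, b) = s(u, v)
      · rw [Sym2.eq_iff] at he
        rcases he with ⟨rfl, rfl⟩ | ⟨rfl, rfl⟩
        · exact Or.inr mem_side_self
        · exact Or.inl mem_side_self
      · have hadj : (eRestrict T S u v).Adj a b :=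
          eRestrict_adj.mpr ⟨hab, hsupp a (by simp), hsupp b (by simp), he⟩
        rcases ha with h | h
        · exact Or.inl (reach_mem_side h hadj.reachable)
        · exact Or.inr (reach_mem_side h hadj.reachable)
    exact ih (fun z hz => hsupp z (by simp [hz])) hb

lemma cover (hConn : Conn T S) (hu : u ∈ S) (hx : x ∈ S) :
    x ∈ side T S u v u ∪ side T S u v v := by
  obtain ⟨p, hsupp⟩ := hConn u hu x hx
  exact cover_aux p hsupp (Or.inl mem_side_self)

lemma colorBound {c : Sym2 V → ℕ} {lvl d : ℕ}
    (h : SplitColoring T c S lvl d) (hT : T.IsTree) :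
    Conn T S → ∀ x y, T.Adj x y → x ∈ S → y ∈ S →
      lvl ≤ c s(x, y) ∧ c s(x, y) < lvl + d := by
  induction h with
  | single v lvl =>
    intro _ x y hxy hx hy
    rw [Set.mem_singleton_iff] at hx hy
    exact absurd (hx.trans hy.symm) hxy.ne
  | split S u v lvl d₁ d₂ hbal hc h1 h2 ih1 ih2 =>
    intro hConn x y hxy hx hy
    have hd₁ := le_max_left d₁ d₂
    have hd₂ := le_max_right d₁ d₂
    by_cases he : s(x, y) = s(u, v)
    · rw [he, hc]; omega
    · have hadj : (eRestrict T S u v).Adj x y := eRestrict_adj.mpr ⟨hxy, hx, hy, he⟩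
      rcases cover hConn hbal.2.1 hx with h | h
      · have := ih1 conn_side x y hxy h (reach_mem_side h hadj.reachable)
        omega
      · have := ih2 conn_side x y hxy h (reach_mem_side h hadj.reachable)
        omega

lemma main_lemma {c : Sym2 V → ℕ} {lvl d : ℕ}
    (h : SplitColoring T c S lvl d) (hT : T.IsTree) :
    Conn T S → ∀ x y, x ∈ S → y ∈ S → x ≠ y →
      ∃ p : T.Walk x y, p.IsPath ∧ (∀ z ∈ p.support, z ∈ S) ∧
        ∃ col, lvl ≤ col ∧ (p.edges.filter fun e => c e = col).length = 1 := by
  induction h with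
  | single v lvl =>
    intro _ x y hx hy hne
    rw [Set.mem_singleton_iff] at hx hy
    exact absurd (hx.trans hy.symm) hne
  | split S u v lvl d₁ d₂ hbal hc h1 h2 ih1 ih2 =>
    intro hConn x y hx hy hne
    obtain ⟨huv, hu, hv, -⟩ := hbal
    have cross : ∀ a b : V, a ∈ side T S u v u → b ∈ side T S u v v →
        ∃ p : T.Walk a b, p.IsPath ∧ (∀ z ∈ p.support, z ∈ S) ∧
          (p.edges.filter fun e => c e = lvl).length = 1 := by
      intro a b ha hb
      obtain ⟨p₁, hp₁, hs₁⟩ := path_in_side ha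
      obtain ⟨p₂', hp₂', hs₂'⟩ := path_in_side hb
      set p₂ : T.Walk v b := p₂'.reverse with hp2def
      have hp₂ : p₂.IsPath := hp₂'.reverse
      have hs₂ : ∀ z ∈ p₂.support, z ∈ side T S u v v := by
        intro z hz
        rw [hp2def, Walk.support_reverse, List.mem_reverse] at hz
        exact hs₂' z hz
      set p : T.Walk a b := p₁.append (Walk.cons huv p₂) with hpdef
      have hsupp : ∀ z ∈ p.support, z ∈ S := by
        intro z hz
        rw [hpdef, Walk.support_append] at hz
        rcases List.mem_append.mp hz with hz | hz
        · exact side_subset hu (hs₁ z hz)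
        · have : z ∈ p₂.support := by
            simpa using hz
          exact side_subset hv (hs₂ z this)
      have hpath : p.IsPath := by
        rw [Walk.isPath_def, hpdef, Walk.support_append]
        have htail : (Walk.cons huv p₂).support.tail = p₂.support := by
          simp
        rw [htail]
        refine List.Nodup.append (hp₁.support_nodup) (hp₂.support_nodup) ?_
        intro z hz1 hz2
        exact side_disjoint hT huv (hs₁ z hz1) (hs₂ z hz2)
      refine ⟨p, hpath, hsupp, ?_⟩
      have hedges1 : ∀ e ∈ p₁.edges, ¬ c e = lvl := by
        intro e he
        have h1' : ∀ z ∈ p₁.support, z ∈ side T S u v u := hs₁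
        revert he
        induction e using Sym2.ind with
        | _ a' b' =>
          intro he hce
          have hadj : T.Adj a' b' := p₁.adj_of_mem_edges he
          have ha' := hs₁ a' (p₁.fst_mem_support_of_mem_edges he)
          have hb' := hs₁ b' (p₁.snd_mem_support_of_mem_edges he)
          have := (colorBound h1 hT conn_side a' b' hadj ha' hb').1
          omega
      have hedges2 : ∀ e ∈ p₂.edges, ¬ c e = lvl := by
        intro e he
        revert he
        induction e using Sym2.ind with
        | _ a' b' =>
          intro he hce
          have hadj : T.Adj a' b' := p₂.adj_of_mem_edges he
          have ha' := hs₂ a' (p₂.fst_mem_support_of_mem_edges he)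
          have hb' := hs₂ b' (p₂.snd_mem_support_of_mem_edges he)
          have := (colorBound h2 hT conn_side a' b' hadj ha' hb').1
          omega
      have he1 : p₁.edges.filter (fun e => c e = lvl) = [] := by
        rw [List.filter_eq_nil_iff]
        intro e he
        simpa using hedges1 e he
      have he2 : p₂.edges.filter (fun e => c e = lvl) = [] := by
        rw [List.filter_eq_nil_iff]
        intro e he
        simpa using hedges2 e he
      rw [hpdef, Walk.edges_append, Walk.edges_cons, List.filter_append,
        List.filter_cons, he1, he2]
      simp [hc]
    rcases cover hConn hu hx with hxu | hxv
    · rcases cover hConn hu hy with hyu | hyv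
      · obtain ⟨p, hp, hsupp, col, hcol, hfil⟩ := ih1 conn_side x y hxu hyu hne
        exact ⟨p, hp, fun z hz => side_subset hu (hsupp z hz), col, by omega, hfil⟩
      · obtain ⟨p, hp, hsupp, hfil⟩ := cross x y hxu hyv
        exact ⟨p, hp, hsupp, lvl, le_refl _, hfil⟩
    · rcases cover hConn hu hy with hyu | hyv
      · obtain ⟨p, hp, hsupp, hfil⟩ := cross y x hyu hxv
        refine ⟨p.reverse, hp.reverse, ?_, lvl, le_refl _, ?_⟩
        · intro z hz
          rw [Walk.support_reverse, List.mem_reverse] at hz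
          exact hsupp z hz
        · rw [Walk.edges_reverse, List.filter_reverse, List.length_reverse]
          exact hfil
      · obtain ⟨p, hp, hsupp, col, hcol, hfil⟩ := ih2 conn_side x y hxv hyv hne
        exact ⟨p, hp, fun z hz => side_subset hv (hsupp z hz), col, by omega, hfil⟩

end Aux

/-- Coloring each edge of a tree `T` by the iteration at which the recursive
balanced-edge-splitting algorithm removes it yields a conflict-free connection
coloring; consequently `cfc(T) ≤ d(T)`. -/
theorem splitColoring_isCFC {V : Type*} [Fintype V] (T : SimpleGraph V)
    (hT : T.IsTree) (c : Sym2 V → ℕ) (d : ℕ)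
    (h : SplitColoring T c Set.univ 1 d) :
    IsCFCColoring T c ∧ cfcNum T ≤ d := by
  have hConn : Conn T Set.univ := by
    intro x _ y _
    obtain ⟨p⟩ := hT.isConnected x y
    exact ⟨p, fun z _ => trivial⟩
  have hbound : ∀ e ∈ T.edgeSet, 1 ≤ c e ∧ c e < 1 + d := by
    intro e he
    induction e using Sym2.ind with
    | _ a b =>
      rw [SimpleGraph.mem_edgeSet] at he
      exact colorBound h hT hConn a b he trivial trivial
  have hCFC : IsCFCColoring T c := by
    intro x y hne
    obtain ⟨p, hp, -, col, -, hfil⟩ := main_lemma h hT hConn x y trivial trivial hne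
    exact ⟨p, hp, col, hfil⟩
  refine ⟨hCFC, ?_⟩
  apply Nat.sInf_le
  refine ⟨fun e => c e - 1, ?_, ?_⟩
  · intro e he
    have := hbound e he
    simp only
    omega
  · intro x y hne
    obtain ⟨p, hp, -, col, hcol, hfil⟩ := main_lemma h hT hConn x y trivial trivial hne
    refine ⟨p, hp, col - 1, ?_⟩
    have heq : p.edges.filter (fun e => c e - 1 = col - 1) =
        p.edges.filter (fun e => c e = col) := by
      apply List.filter_congr
      intro e he
      have hce : 1 ≤ c e := (hbound e (p.edges_subset_edgeSet he)).1
      simp only [decide_eq_decide]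
      omega
    show (p.edges.filter (fun e => c e - 1 = col - 1)).length = 1
    rw [heq, hfil]
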